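/- Let K be a field, L a finite-dimensional Lie algebra over K, H a Cartan subalgebra of L (a nilpotent self-normalizing Lie subalgebra), and for a linear functional α on H let L_α denote the corresponding root space (generalized weight space of the adjoint action of H on L). Let Φ be the set of nonzero functionals α with L_α ≠ 0, and let Σ₊ ⊆ Φ satisfy Σ₊ ∩ (−Σ₊) = ∅ and: α, β ∈ Σ₊ and α+β ∈ Φ imply α+β ∈ Σ₊. Let R ⊆ Σ₊ be of Hessenberg type: α ∈ R, β ∈ Σ₊ and α−β ∈ Σ₊ imply α−β ∈ R; set C = Σ₊ \ R. Then n = Σ_{α∈Σ₊} L_α is a Lie subalgebra of L, and n_C = Σ_{α∈C} L_α is a Lie ideal of n, i.e. ⁅x, y⁆ ∈ n_C for every x ∈ n and y ∈ n_C. -/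
import Mathlib

open LieAlgebra

private lemma key_brak {K L : Type*} [Field K] [LieRing L] [LieAlgebra K L]
    [FiniteDimensional K L] (H : LieSubalgebra K L) [H.IsCartanSubalgebra]
    (S T : Set (H → K)) (U : Set (H → K))
    (hST : ∀ α ∈ S, ∀ β ∈ T,
      (rootSpace H (α + β) : Submodule K L) ≤ ⨆ γ ∈ U, (rootSpace H γ).toSubmodule)
    {x y : L} (hx : x ∈ ⨆ α ∈ S, (rootSpace H α).toSubmodule)
    (hy : y ∈ ⨆ β ∈ T, (rootSpace H β).toSubmodule) :
    ⁅x, y⁆ ∈ ⨆ γ ∈ U, (rootSpace H γ).toSubmodule := by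
  rw [iSup_subtype'] at hx hy
  induction hx using Submodule.iSup_induction' with
  | mem α x hx =>
    induction hy using Submodule.iSup_induction' with
    | mem β y hy =>
      exact hST α α.2 β β.2
        (LieAlgebra.lie_mem_genWeightSpace_of_mem_genWeightSpace hx hy)
    | zero => simp
    | add y z _ _ hy hz => rw [lie_add]; exact add_mem hy hz
  | zero => simp
  | add x z _ _ hx hz => rw [add_lie]; exact add_mem hx hz

theorem hessenberg_complement_is_ideal
    {K L : Type*} [Field K] [LieRing L] [LieAlgebra K L] [FiniteDimensional K L]
    (H : LieSubalgebra K L) [H.IsCartanSubalgebra]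
    (Phi : Set (H → K))
    (hPhi : Phi = {α : H → K | α ≠ 0 ∧ LieAlgebra.rootSpace H α ≠ ⊥})
    (Sp : Set (H → K)) (hSpPhi : Sp ⊆ Phi)
    (hdisj : ∀ α ∈ Sp, -α ∉ Sp)
    (hclosed : ∀ α ∈ Sp, ∀ β ∈ Sp, α + β ∈ Phi → α + β ∈ Sp)
    (R : Set (H → K)) (hRSp : R ⊆ Sp)
    (hHess : ∀ α ∈ R, ∀ β ∈ Sp, α - β ∈ Sp → α - β ∈ R)
    (C : Set (H → K)) (hC : C = Sp \ R)
    (N NC : Submodule K L)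
    (hN : N = ⨆ α ∈ Sp, (LieAlgebra.rootSpace H α).toSubmodule)
    (hNC : NC = ⨆ α ∈ C, (LieAlgebra.rootSpace H α).toSubmodule) :
    (∀ x ∈ N, ∀ y ∈ N, ⁅x, y⁆ ∈ N) ∧
    (∀ x ∈ N, ∀ y ∈ NC, ⁅x, y⁆ ∈ NC) := by
  subst hN hNC hC
  have hsum : ∀ α ∈ Sp, ∀ β ∈ Sp, ∀ (U : Set (H → K)),
      (α + β ∈ Phi → α + β ∈ U) →
      (rootSpace H (α + β) : Submodule K L) ≤ ⨆ γ ∈ U, (rootSpace H γ).toSubmodule := by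
    intro α hα β hβ U hU
    by_cases h : α + β ∈ Phi
    · exact le_iSup₂_of_le (α + β) (hU h) le_rfl
    · rw [hPhi] at h
      simp only [Set.mem_setOf_eq, not_and_or, not_not] at h
      rcases h with h | h
      · exfalso
        apply hdisj α hα
        have : -α = β := by linear_combination (norm := (ext x; simp)) -h
        rwa [this]
      · simp [h]
  constructor
  · intro x hx y hy
    exact key_brak H Sp Sp Sp
      (fun α hα β hβ => hsum α hα β hβ Sp (hclosed α hα β hβ)) hx hy
  · intro x hx y hy
    refine key_brak H Sp (Sp \ R) (Sp \ R) (fun α hα β hβ => ?_) hx hy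
    refine hsum α hα β hβ.1 _ (fun hsp => ?_)
    have hSpab : α + β ∈ Sp := hclosed α hα β hβ.1 hsp
    refine ⟨hSpab, fun hR => hβ.2 ?_⟩
    have := hHess (α + β) hR α hα (by simpa using hβ.1)
    simpa using this
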